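/- Let 𝐤 be an algebraically closed field, 1 ≤ k ≤ n, and A_1, ..., A_k ⊆ ℤ^n finite sets each containing 0. If there is a non-empty subset J ⊆ {1,...,k} such that the ℚ-linear span of ⋃_{j∈J} A_j has dimension strictly less than |J|, then general Laurent polynomials f_1, ..., f_k with supports A_1, ..., A_k generate the unit ideal of R = 𝐤[x_1^{±1},...,x_n^{±1}]; equivalently, for general coefficients the system f_1 = ⋯ = f_k = 0 has no common solution in (𝐤^*)^n. -/

import Mathlib

open scoped BigOperators

noncomputable section

/-- The rational vector corresponding to an integer vector. -/
def ratVec {n : ℕ} (v : Fin n → ℤ) : Fin n → ℚ := fun i => (v i : ℚ)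

/-- Dimension of the ℚ-linear span of a set of integer vectors. -/
def spanDim {n : ℕ} (S : Set (Fin n → ℤ)) : ℕ :=
  Module.finrank ℚ (Submodule.span ℚ (ratVec '' S))

/-- Coefficient index type for a family of supports. -/
abbrev CoeffIdx {n : ℕ} {ι : Type*} (A : ι → Finset (Fin n → ℤ)) : Type _ :=
  (j : ι) × {a // a ∈ A j}

/-- The Laurent polynomial (element of the group algebra of `ℤⁿ` over `𝕜`) with
support `A j` and coefficients given by `c`. -/
def lpoly {𝕜 : Type*} [Field 𝕜] {n : ℕ} {ι : Type*} (A : ι → Finset (Fin n → ℤ))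
    (c : CoeffIdx A → 𝕜) (j : ι) : AddMonoidAlgebra 𝕜 (Fin n → ℤ) :=
  ∑ a ∈ (A j).attach, AddMonoidAlgebra.single (a : Fin n → ℤ) (c ⟨j, a⟩)

/-- Evaluation of the `j`-th Laurent polynomial at a point of the torus `(𝕜ˣ)ⁿ`. -/
def evalAt {𝕜 : Type*} [Field 𝕜] {n : ℕ} {ι : Type*} (A : ι → Finset (Fin n → ℤ))
    (c : CoeffIdx A → 𝕜) (x : Fin n → 𝕜ˣ) (j : ι) : 𝕜 :=
  ∑ a ∈ (A j).attach, c ⟨j, a⟩ * ((∏ i, x i ^ ((a : Fin n → ℤ) i) : 𝕜ˣ) : 𝕜)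

/-- A property `P` of coefficient tuples holds *generically* on the torus `(𝕜ˣ)^σ`:
it holds on a nonempty Zariski-open (hence dense) subset of the torus. -/
def Generically {𝕜 : Type*} [Field 𝕜] {σ : Type*} [Fintype σ] (P : (σ → 𝕜) → Prop) : Prop :=
  ∃ q : MvPolynomial σ 𝕜,
    (∃ c : σ → 𝕜, (∀ s, c s ≠ 0) ∧ MvPolynomial.eval c q ≠ 0) ∧
    ∀ c : σ → 𝕜, (∀ s, c s ≠ 0) → MvPolynomial.eval c q ≠ 0 → P c

namespace Lem21

variable {𝕜 : Type*} [Field 𝕜] {n : ℕ}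

/-- Monomial evaluation at a point of the torus, as a monoid hom to units. -/
def torusU (x : Fin n → 𝕜ˣ) : Multiplicative (Fin n → ℤ) →* 𝕜ˣ where
  toFun a := ∏ i, x i ^ (Multiplicative.toAdd a) i
  map_one' := by simp
  map_mul' a b := by
    simp only [toAdd_mul, Pi.add_apply, zpow_add]
    rw [Finset.prod_mul_distrib]

/-- Evaluation of a Laurent polynomial with coefficients in `R` at a torus point,
specializing coefficients via `φ`. -/
def torusEv {R : Type*} [CommSemiring R] (φ : R →+* 𝕜) (x : Fin n → 𝕜ˣ) :
    AddMonoidAlgebra R (Fin n → ℤ) →+* 𝕜 :=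
  AddMonoidAlgebra.liftNCRingHom φ ((Units.coeHom 𝕜).comp (torusU x)) fun _ _ => Commute.all _ _

theorem torusEv_single {R : Type*} [CommSemiring R] (φ : R →+* 𝕜) (x : Fin n → 𝕜ˣ)
    (a : Fin n → ℤ) (r : R) :
    torusEv φ x (AddMonoidAlgebra.single a r) = φ r * ((∏ i, x i ^ a i : 𝕜ˣ) : 𝕜) := by
  show AddMonoidAlgebra.liftNC (φ : R →+ 𝕜) (⇑((Units.coeHom 𝕜).comp (torusU x)))
    (AddMonoidAlgebra.single a r) = _
  rw [AddMonoidAlgebra.liftNC_single]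
  rfl

theorem torusEv_lpoly {k : ℕ} (A : Fin k → Finset (Fin n → ℤ)) (c : CoeffIdx A → 𝕜)
    (x : Fin n → 𝕜ˣ) (j : Fin k) :
    torusEv (RingHom.id 𝕜) x (lpoly A c j) = evalAt A c x j := by
  rw [lpoly, map_sum, evalAt]
  exact Finset.sum_congr rfl fun a _ => by rw [torusEv_single]; rfl

theorem prod_zpow_pi_single (x : Fin n → 𝕜ˣ) (i : Fin n) (z : ℤ) :
    (∏ t, x t ^ ((Pi.single i z : Fin n → ℤ) t)) = x i ^ z := by
  classical
  rw [Finset.prod_eq_single i (fun t _ ht => by rw [Pi.single_eq_of_ne ht, zpow_zero])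
    (by simp)]
  rw [Pi.single_eq_same]

theorem span_eq_top_of_no_common_zero [IsAlgClosed 𝕜] {ι : Type*}
    (f : ι → AddMonoidAlgebra 𝕜 (Fin n → ℤ))
    (h : ∀ x : Fin n → 𝕜ˣ, ∃ j, torusEv (RingHom.id 𝕜) x (f j) ≠ 0) :
    Ideal.span (Set.range f) = ⊤ := by
  classical
  by_contra hne
  obtain ⟨m, hmax, hle⟩ := Ideal.exists_le_maximal _ hne
  set g : (Fin n ⊕ Fin n) → AddMonoidAlgebra 𝕜 (Fin n → ℤ) :=
    Sum.elim (fun i => AddMonoidAlgebra.single (Pi.single i 1) 1)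
             (fun i => AddMonoidAlgebra.single (-Pi.single i 1) 1) with hg
  set π : MvPolynomial (Fin n ⊕ Fin n) 𝕜 →+* AddMonoidAlgebra 𝕜 (Fin n → ℤ) :=
    (MvPolynomial.aeval g).toRingHom with hπ
  have hπX : ∀ s, π (MvPolynomial.X s) = g s := fun s => MvPolynomial.aeval_X g s
  have hπC : ∀ r, π (MvPolynomial.C r) = AddMonoidAlgebra.single 0 r := by
    intro r
    show (MvPolynomial.aeval g) (MvPolynomial.C r) = _
    rw [MvPolynomial.aeval_C]
    simp [AddMonoidAlgebra.coe_algebraMap]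
  have key : ∀ (i : Fin n) (z : ℤ),
      AddMonoidAlgebra.single (Pi.single i z) (1 : 𝕜) ∈ π.range := by
    intro i z
    rcases le_or_gt 0 z with hz | hz
    · refine ⟨MvPolynomial.X (Sum.inl i) ^ z.toNat, ?_⟩
      rw [map_pow, hπX]
      simp only [hg, Sum.elim_inl]
      rw [AddMonoidAlgebra.single_pow, one_pow]
      congr 1
      funext t
      rcases eq_or_ne t i with rfl | ht
      · simp [Int.toNat_of_nonneg hz]
      · simp [Pi.single_eq_of_ne ht]
    · refine ⟨MvPolynomial.X (Sum.inr i) ^ (-z).toNat, ?_⟩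
      rw [map_pow, hπX]
      simp only [hg, Sum.elim_inr]
      rw [AddMonoidAlgebra.single_pow, one_pow]
      congr 1
      funext t
      rcases eq_or_ne t i with rfl | ht
      · simp only [Pi.smul_apply, Pi.neg_apply, Pi.single_eq_same, smul_neg, nsmul_eq_mul,
          mul_one]
        omega
      · simp [Pi.single_eq_of_ne ht]
  have hsingle : ∀ (a : Fin n → ℤ) (r : 𝕜), AddMonoidAlgebra.single a r ∈ π.range := by
    intro a r
    have hrw : AddMonoidAlgebra.single a r
        = AddMonoidAlgebra.single (0 : Fin n → ℤ) r *
          ∏ i, AddMonoidAlgebra.single (Pi.single i (a i)) (1 : 𝕜) := by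
      rw [AddMonoidAlgebra.prod_single, AddMonoidAlgebra.single_mul_single]
      congr 1
      · rw [zero_add]
        exact (Finset.univ_sum_single a).symm
      · simp
    rw [hrw]
    exact mul_mem ⟨MvPolynomial.C r, hπC r⟩ (prod_mem fun i _ => key i (a i))
  have hπsurj : Function.Surjective π := by
    intro f
    have : f ∈ π.range := by
      induction f using AddMonoidAlgebra.induction with
      | zero => exact zero_mem _
      | single_add a b f _ _ ih => exact add_mem (hsingle a b) ih
    exact this
  have hm' : (m.comap π).IsMaximal := Ideal.comap_isMaximal_of_surjective π hπsurj
  obtain ⟨p, hp⟩ := MvPolynomial.isMaximal_iff_eq_vanishingIdeal_singleton.mp hm'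
  have hmem : ∀ F : MvPolynomial (Fin n ⊕ Fin n) 𝕜, π F ∈ m → MvPolynomial.eval p F = 0 := by
    intro F hF
    have hF' : F ∈ m.comap π := hF
    rw [hp] at hF'
    exact (MvPolynomial.mem_vanishingIdeal_singleton_iff p F).mp hF'
  have hunit : ∀ i, p (Sum.inl i) * p (Sum.inr i) = 1 := by
    intro i
    have h1 : π (MvPolynomial.X (Sum.inl i) * MvPolynomial.X (Sum.inr i) - 1) = 0 := by
      rw [map_sub, map_mul, hπX, hπX, map_one]
      simp only [hg, Sum.elim_inl, Sum.elim_inr]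
      rw [AddMonoidAlgebra.single_mul_single, mul_one, add_neg_cancel]
      rw [AddMonoidAlgebra.one_def, sub_self]
    have h2 := hmem _ (by rw [h1]; exact m.zero_mem)
    simpa [sub_eq_zero] using h2
  set xu : Fin n → 𝕜ˣ := fun i => Units.mkOfMulEqOne _ _ (hunit i) with hxu
  have hhom : (torusEv (RingHom.id 𝕜) xu).comp π = MvPolynomial.eval p := by
    apply MvPolynomial.ringHom_ext
    · intro r
      rw [RingHom.comp_apply, hπC, torusEv_single]
      simp
    · rintro (i | i) <;> rw [RingHom.comp_apply, hπX, MvPolynomial.eval_X]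
      · simp only [hg, Sum.elim_inl]
        rw [torusEv_single]
        rw [prod_zpow_pi_single, zpow_one]
        simp [hxu]
      · simp only [hg, Sum.elim_inr]
        rw [torusEv_single]
        have : -Pi.single i (1:ℤ) = (Pi.single i (-1 : ℤ) : Fin n → ℤ) := by
          funext t
          rcases eq_or_ne t i with rfl | ht
          · simp
          · simp [Pi.single_eq_of_ne ht]
        rw [this, prod_zpow_pi_single, zpow_neg, zpow_one]
        simp only [map_one, one_mul]
        have hinv : ((xu i)⁻¹ : 𝕜ˣ) = Units.mkOfMulEqOne _ _
            (show p (Sum.inr i) * p (Sum.inl i) = 1 by rw [mul_comm]; exact hunit i) := by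
          rw [eq_comm, eq_inv_iff_mul_eq_one]
          ext
          simp [hxu]
          exact (by rw [mul_comm]; exact hunit i)
        rw [hinv]
        rfl
  obtain ⟨j, hj⟩ := h xu
  obtain ⟨F, hF⟩ := hπsurj (f j)
  have hfm : f j ∈ m := hle (Ideal.subset_span ⟨j, rfl⟩)
  have h0 := hmem F (by rw [hF]; exact hfm)
  rw [← hhom, RingHom.comp_apply, hF] at h0
  exact hj h0

open scoped Pointwise

variable {n : ℕ}

/-- Iterated sumsets: `TS S' N` is the set of sums of `N` elements of `S'`. -/
def TS (S' : Finset (Fin n → ℤ)) : ℕ → Finset (Fin n → ℤ)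
  | 0 => {0}
  | N + 1 => TS S' N + S'

theorem TS_add_subset (S' : Finset (Fin n → ℤ)) (a : ℕ) :
    ∀ b, TS S' a + TS S' b ⊆ TS S' (a + b) := by
  intro b
  induction b with
  | zero =>
    intro v hv
    rw [Finset.mem_add] at hv
    obtain ⟨u, hu, s, hs, rfl⟩ := hv
    rw [TS, Finset.mem_singleton] at hs
    subst hs
    simpa using hu
  | succ b ih =>
    show TS S' a + (TS S' b + S') ⊆ TS S' (a + b) + S'
    rw [← add_assoc]
    exact Finset.add_subset_add_right ih

theorem TS_subset_succ (S' : Finset (Fin n → ℤ)) (h0 : (0 : Fin n → ℤ) ∈ S') (N : ℕ) :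
    TS S' N ⊆ TS S' (N + 1) := by
  intro v hv
  have := Finset.add_mem_add hv h0
  rw [add_zero] at this
  exact this

theorem TS_mono (S' : Finset (Fin n → ℤ)) (h0 : (0 : Fin n → ℤ) ∈ S') {a b : ℕ}
    (h : a ≤ b) : TS S' a ⊆ TS S' b := by
  induction h with
  | refl => exact subset_rfl
  | step _ ih => exact ih.trans (TS_subset_succ S' h0 _)

section Supports

variable {K : Type*} [CommSemiring K]

theorem support_mul_TS (S' : Finset (Fin n → ℤ)) {f g : AddMonoidAlgebra K (Fin n → ℤ)}
    {a b : ℕ} (hf : f.coeff.support ⊆ TS S' a) (hg : g.coeff.support ⊆ TS S' b) :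
    (f * g).coeff.support ⊆ TS S' (a + b) := by
  classical
  refine (AddMonoidAlgebra.support_coeff_mul_subset f g).trans ?_
  refine Finset.Subset.trans ?_ (TS_add_subset S' a b)
  exact Finset.add_subset_add hf hg

theorem support_pow_TS (S' : Finset (Fin n → ℤ)) {f : AddMonoidAlgebra K (Fin n → ℤ)}
    (hf : f.coeff.support ⊆ TS S' 1) (p : ℕ) : (f ^ p).coeff.support ⊆ TS S' p := by
  induction p with
  | zero =>
    rw [pow_zero, AddMonoidAlgebra.one_def, AddMonoidAlgebra.coeff_single]
    refine Finset.Subset.trans Finsupp.support_single_subset ?_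
    · exact subset_rfl
  | succ p ih =>
    rw [pow_succ]
    exact support_mul_TS S' ih hf

theorem support_prod_TS (S' : Finset (Fin n → ℤ)) {ι : Type*}
    {G : ι → AddMonoidAlgebra K (Fin n → ℤ)} (hG : ∀ i, (G i).coeff.support ⊆ TS S' 1)
    (t : Finset ι) (p : ι → ℕ) :
    (∏ i ∈ t, G i ^ p i).coeff.support ⊆ TS S' (∑ i ∈ t, p i) := by
  classical
  induction t using Finset.cons_induction with
  | empty =>
    simp only [Finset.prod_empty, Finset.sum_empty]
    rw [AddMonoidAlgebra.one_def, AddMonoidAlgebra.coeff_single]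
    exact Finsupp.support_single_subset
  | cons a t ha ih =>
    rw [Finset.prod_cons, Finset.sum_cons]
    exact support_mul_TS S' (support_pow_TS S' (hG a) (p a)) ih

end Supports

theorem card_TS_le (S : Finset (Fin n → ℤ)) :
    ∃ MD : ℕ, ∀ N, (TS (insert 0 S) N).card ≤
      (2 * (N * MD) + 1) ^ spanDim (S : Set (Fin n → ℤ)) := by
  classical
  set V : Submodule ℚ (Fin n → ℚ) := Submodule.span ℚ (ratVec '' (S : Set (Fin n → ℤ))) with hV
  haveI hfd : FiniteDimensional ℚ V :=
    FiniteDimensional.span_of_finite ℚ (S.finite_toSet.image _)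
  set d : ℕ := spanDim (S : Set (Fin n → ℤ)) with hd
  have hdV : Module.finrank ℚ V = d := rfl
  let bas : Module.Basis (Fin d) ℚ V := Module.finBasisOfFinrankEq ℚ V hdV
  let r : V ≃ₗ[ℚ] (Fin d → ℚ) := bas.equivFun
  let fq : (Fin n → ℤ) → (Fin d → ℚ) := fun v =>
    if h : ratVec v ∈ V then r ⟨ratVec v, h⟩ else 0
  have hrat_add : ∀ u w : Fin n → ℤ, ratVec (u + w) = ratVec u + ratVec w := by
    intro u w; funext i; simp [ratVec]
  have hrat_zero : ratVec (0 : Fin n → ℤ) = 0 := by funext i; simp [ratVec]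
  have hfq_add : ∀ u w, ratVec u ∈ V → ratVec w ∈ V → fq (u + w) = fq u + fq w := by
    intro u w hu hw
    have huw : ratVec (u + w) ∈ V := by rw [hrat_add]; exact add_mem hu hw
    simp only [fq, dif_pos hu, dif_pos hw, dif_pos huw]
    rw [← map_add]
    congr 1
    exact Subtype.ext (hrat_add u w)
  have hS'V : ∀ s ∈ insert (0 : Fin n → ℤ) S, ratVec s ∈ V := by
    intro s hs
    rcases Finset.mem_insert.mp hs with rfl | hs
    · rw [hrat_zero]; exact zero_mem V
    · exact Submodule.subset_span ⟨s, hs, rfl⟩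
  set Q : Finset ℚ := Finset.image (fun pr : (Fin n → ℤ) × Fin d => fq pr.1 pr.2)
    ((insert 0 S) ×ˢ Finset.univ) with hQ
  set D : ℕ := ∏ q ∈ Q, q.den with hD
  set MD : ℕ := Q.sup (fun q => (q * (D : ℚ)).num.natAbs) with hMD
  have hQbound : ∀ q ∈ Q, ∃ z : ℤ, q * (D : ℚ) = (z : ℚ) ∧ z.natAbs ≤ MD := by
    intro q hq
    obtain ⟨t, ht⟩ := Finset.dvd_prod_of_mem (fun q : ℚ => q.den) hq
    have hz : q * (D : ℚ) = ((q.num * (t : ℤ) : ℤ) : ℚ) := by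
      have hcast : ((D : ℕ) : ℚ) = (q.den : ℚ) * (t : ℚ) := by
        rw [hD, ht]; push_cast; ring
      rw [hcast, ← mul_assoc, Rat.mul_den_eq_num]
      push_cast; ring
    refine ⟨q.num * t, hz, ?_⟩
    have hnum : (q * (D : ℚ)).num = q.num * t := by rw [hz, Rat.num_intCast]
    rw [← hnum]
    exact Finset.le_sup (f := fun q : ℚ => (q * (D : ℚ)).num.natAbs) hq
  have key : ∀ N, ∀ v ∈ TS (insert 0 S) N, (ratVec v ∈ V) ∧
      ∀ i, ∃ z : ℤ, fq v i * (D : ℚ) = (z : ℚ) ∧ z.natAbs ≤ N * MD := by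
    intro N
    induction N with
    | zero =>
      intro v hv
      rw [TS, Finset.mem_singleton] at hv
      subst hv
      have hv0 : ratVec (0 : Fin n → ℤ) ∈ V := by rw [hrat_zero]; exact zero_mem V
      refine ⟨hv0, fun i => ⟨0, ?_, by simp⟩⟩
      have hfq0 : fq (0 : Fin n → ℤ) = 0 := by
        simp only [fq, dif_pos hv0]
        have : (⟨ratVec (0 : Fin n → ℤ), hv0⟩ : V) = 0 := Subtype.ext hrat_zero
        rw [this, map_zero]
      rw [hfq0]
      simp
    | succ N ih =>
      intro v hv
      rw [TS, Finset.mem_add] at hv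
      obtain ⟨u, hu, s, hs, rfl⟩ := hv
      obtain ⟨huV, hub⟩ := ih u hu
      have hsV := hS'V s hs
      refine ⟨by rw [hrat_add]; exact add_mem huV hsV, ?_⟩
      intro i
      obtain ⟨zu, hzu, hzub⟩ := hub i
      have hfqQ : fq s i ∈ Q :=
        Finset.mem_image.mpr ⟨(s, i), Finset.mem_product.mpr ⟨hs, Finset.mem_univ i⟩, rfl⟩
      obtain ⟨zs, hzs, hzsb⟩ := hQbound _ hfqQ
      refine ⟨zu + zs, ?_, ?_⟩
      · rw [hfq_add u s huV hsV, Pi.add_apply, add_mul, hzu, hzs]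
        push_cast; ring
      · calc (zu + zs).natAbs ≤ zu.natAbs + zs.natAbs := Int.natAbs_add_le _ _
        _ ≤ N * MD + MD := Nat.add_le_add hzub hzsb
        _ = (N + 1) * MD := by ring
  refine ⟨MD, fun N => ?_⟩
  have hDpos : (0 : ℚ) < (D : ℚ) := by
    have : 0 < D := by
      rw [hD]
      exact Finset.prod_pos (fun q _ => q.pos)
    exact_mod_cast this
  set g : (Fin n → ℤ) → (Fin d → ℤ) := fun v i => (fq v i * (D : ℚ)).num with hgdef
  have hgval : ∀ v ∈ TS (insert 0 S) N, ∀ i,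
      ((g v i : ℤ) : ℚ) = fq v i * (D : ℚ) ∧ (g v i).natAbs ≤ N * MD := by
    intro v hv i
    obtain ⟨-, hb⟩ := key N v hv
    obtain ⟨z, hz, hzb⟩ := hb i
    have hgz : g v i = z := by
      simp only [hgdef]
      rw [hz, Rat.num_intCast]
    rw [hgz, ← hz]
    exact ⟨rfl, hzb⟩
  have hinj : Set.InjOn g (TS (insert 0 S) N) := by
    intro u hu w hw huw
    have h1 : fq u = fq w := by
      funext i
      have e1 := (hgval u hu i).1
      have e2 := (hgval w hw i).1
      have h2 : fq u i * (D : ℚ) = fq w i * (D : ℚ) := by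
        rw [← e1, ← e2, huw]
      exact mul_right_cancel₀ hDpos.ne' h2
    have huV := (key N u hu).1
    have hwV := (key N w hw).1
    simp only [fq, dif_pos huV, dif_pos hwV] at h1
    have h2 : ratVec u = ratVec w := congrArg Subtype.val (r.injective h1)
    funext i
    have h3 : ((u i : ℤ) : ℚ) = ((w i : ℤ) : ℚ) := congrFun h2 i
    exact_mod_cast h3
  have hsub : ∀ v ∈ TS (insert 0 S) N, g v ∈ Fintype.piFinset
      (fun _ : Fin d => Finset.Icc (-(N * MD : ℤ)) (N * MD)) := by
    intro v hv
    rw [Fintype.mem_piFinset]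
    intro i
    have hb := (hgval v hv i).2
    rw [Finset.mem_Icc]
    omega
  have hIcc : (Finset.Icc (-(N * MD : ℤ)) (N * MD)).card = 2 * (N * MD) + 1 := by
    rw [Int.card_Icc]
    omega
  calc (TS (insert 0 S) N).card
      ≤ (Fintype.piFinset (fun _ : Fin d => Finset.Icc (-(N * MD : ℤ)) (N * MD))).card :=
        Finset.card_le_card_of_injOn g hsub hinj
    _ = (2 * (N * MD) + 1) ^ d := by
        rw [Fintype.card_piFinset]
        simp [hIcc]

theorem exists_annihilator {K : Type*} [Field K] {n : ℕ} {ι : Type*} [Fintype ι] [Nonempty ι]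
    (S : Finset (Fin n → ℤ)) (G : ι → AddMonoidAlgebra K (Fin n → ℤ))
    (hsupp : ∀ i, (G i).coeff.support ⊆ S)
    (hdim : spanDim (S : Set (Fin n → ℤ)) < Fintype.card ι) :
    ∃ P : MvPolynomial ι K, P ≠ 0 ∧ MvPolynomial.aeval G P = 0 := by
  classical
  set d := spanDim (S : Set (Fin n → ℤ)) with hd
  set m := Fintype.card ι with hm
  obtain ⟨MD, hMD⟩ := card_TS_le S
  set E := 2 * (m * MD) + 1 with hE
  set N := E ^ d with hN
  have hN1 : 1 ≤ N := Nat.one_le_pow _ _ (by omega)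
  set S' := insert (0 : Fin n → ℤ) S with hS'
  have h0S' : (0 : Fin n → ℤ) ∈ S' := Finset.mem_insert_self _ _
  have hsupp1 : ∀ i, (G i).coeff.support ⊆ TS S' 1 := by
    intro i
    refine (hsupp i).trans ?_
    intro s hs
    have hsS' : s ∈ S' := by rw [hS']; exact Finset.mem_insert_of_mem hs
    have h := Finset.add_mem_add (Finset.mem_singleton_self (0 : Fin n → ℤ)) hsS'
    rw [zero_add] at h
    exact h
  set w : (ι → Fin (N + 1)) → AddMonoidAlgebra K (Fin n → ℤ) :=
    fun α => ∏ i, G i ^ (α i : ℕ) with hw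
  have hwsupp : ∀ α, (w α).coeff.support ⊆ TS S' (m * N) := by
    intro α
    refine (support_prod_TS S' hsupp1 Finset.univ _).trans (TS_mono S' h0S' ?_)
    calc ∑ i, (α i : ℕ) ≤ ∑ _i : ι, N :=
        Finset.sum_le_sum (fun i _ => Nat.le_of_lt_succ (α i).2)
      _ = m * N := by rw [Finset.sum_const, Finset.card_univ, smul_eq_mul, hm]
  set sgl : Finset (AddMonoidAlgebra K (Fin n → ℤ)) :=
    (TS S' (m * N)).image (fun a => AddMonoidAlgebra.single a (1 : K)) with hsgl
  set W : Submodule K (AddMonoidAlgebra K (Fin n → ℤ)) :=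
    Submodule.span K (sgl : Set _) with hWdef
  have hmemW : ∀ α, w α ∈ W := by
    intro α
    rw [← AddMonoidAlgebra.sum_coeff_single (w α)]
    apply Submodule.finsuppSum_mem
    intro a ha
    have h1 : AddMonoidAlgebra.single a ((w α).coeff a)
        = (w α).coeff a • AddMonoidAlgebra.single a (1 : K) := by
      rw [AddMonoidAlgebra.smul_single', mul_one]
    rw [h1]
    refine Submodule.smul_mem _ _ (Submodule.subset_span ?_)
    exact Finset.mem_coe.mpr (Finset.mem_image.mpr
      ⟨a, hwsupp α (Finsupp.mem_support_iff.mpr ha), rfl⟩)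
  haveI : Module.Finite K W := FiniteDimensional.span_of_finite K sgl.finite_toSet
  have hcard : ¬ LinearIndependent K w := by
    intro hli
    have hli' : LinearIndependent K (fun α => (⟨w α, hmemW α⟩ : W)) :=
      LinearIndependent.of_comp W.subtype hli
    have hle1 := LinearIndependent.fintype_card_le_finrank hli'
    have hc1 : Fintype.card (ι → Fin (N + 1)) = (N + 1) ^ m := by
      rw [Fintype.card_fun]
      simp [hm]
    have hle2 : Module.finrank K W ≤ sgl.card := finrank_span_finset_le_card sgl
    have hle3 : sgl.card ≤ (TS S' (m * N)).card := Finset.card_image_le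
    have harith : (2 * ((m * N) * MD) + 1) ^ d < (N + 1) ^ m := by
      have h1 : 2 * ((m * N) * MD) + 1 ≤ E * N := by
        have h2 : 2 * ((m * N) * MD) + 1 = (2 * (m * MD)) * N + 1 := by ring
        rw [h2, hE]
        nlinarith [hN1]
      calc (2 * ((m * N) * MD) + 1) ^ d ≤ (E * N) ^ d := Nat.pow_le_pow_left h1 d
        _ = N * N ^ d := by rw [mul_pow, ← hN]
        _ = N ^ (d + 1) := by ring
        _ ≤ N ^ m := Nat.pow_le_pow_right hN1 (by omega)
        _ < (N + 1) ^ m := Nat.pow_lt_pow_left (Nat.lt_succ_self N) (by omega)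
    have hfinal : (N + 1) ^ m ≤ (2 * ((m * N) * MD) + 1) ^ d := by
      calc (N + 1) ^ m = Fintype.card (ι → Fin (N + 1)) := hc1.symm
        _ ≤ Module.finrank K W := hle1
        _ ≤ sgl.card := hle2
        _ ≤ (TS S' (m * N)).card := hle3
        _ ≤ (2 * ((m * N) * MD) + 1) ^ d := hMD (m * N)
    omega
  obtain ⟨cvec, hsum, α₀, hα₀⟩ := Fintype.not_linearIndependent_iff.mp hcard
  set expα : (ι → Fin (N + 1)) → (ι →₀ ℕ) :=
    fun α => Finsupp.equivFunOnFinite.symm (fun i => (α i : ℕ)) with hexp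
  have hexp_inj : Function.Injective expα := by
    intro a b hab
    have h1 : (fun i => ((a i : ℕ))) = (fun i => ((b i : ℕ))) :=
      Finsupp.equivFunOnFinite.symm.injective hab
    funext i
    exact Fin.val_injective (congrFun h1 i)
  set P : MvPolynomial ι K := ∑ α, MvPolynomial.monomial (expα α) (cvec α) with hP
  refine ⟨P, ?_, ?_⟩
  · intro hP0
    have hc : MvPolynomial.coeff (expα α₀) P = cvec α₀ := by
      rw [hP, MvPolynomial.coeff_sum]
      rw [Finset.sum_eq_single α₀]
      · rw [MvPolynomial.coeff_monomial, if_pos rfl]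
      · intro β _ hβ
        rw [MvPolynomial.coeff_monomial, if_neg (fun hc => hβ (hexp_inj hc))]
      · intro hni; exact absurd (Finset.mem_univ α₀) hni
    rw [hP0, MvPolynomial.coeff_zero] at hc
    exact hα₀ hc.symm
  · rw [hP, map_sum, ← hsum]
    refine Finset.sum_congr rfl fun α _ => ?_
    rw [MvPolynomial.aeval_monomial, Algebra.smul_def]
    congr 1
    rw [Finsupp.prod_fintype]
    · refine Finset.prod_congr rfl fun i _ => ?_
      simp [hexp]
    · intro i; exact pow_zero _

end Lem21

set_option maxHeartbeats 1000000 in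
open MvPolynomial in
/-- The 'only if' direction of Lemma 2.1: if some nonempty subfamily of the supports
spans a ℚ-subspace of dimension less than its size, then general Laurent polynomials
with these supports generate the unit ideal; equivalently, they have no common zero
in the torus. -/
theorem general_unit_ideal_of_small_span {𝕜 : Type*} [Field 𝕜] [IsAlgClosed 𝕜]
    {n k : ℕ} (hk : 1 ≤ k) (hkn : k ≤ n) (A : Fin k → Finset (Fin n → ℤ))
    (h0 : ∀ j, (0 : Fin n → ℤ) ∈ A j)
    (hJ : ∃ J : Finset (Fin k), J.Nonempty ∧
      spanDim (⋃ j ∈ J, (A j : Set (Fin n → ℤ))) < J.card) :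
    Generically (fun c : CoeffIdx A → 𝕜 =>
      Ideal.span (Set.range (lpoly A c)) = (⊤ : Ideal (AddMonoidAlgebra 𝕜 (Fin n → ℤ))) ∧
      ∀ x : Fin n → 𝕜ˣ, ∃ j, evalAt A c x j ≠ 0) := by
  classical
  obtain ⟨J, hJne, hJdim⟩ := hJ
  -- Set-up: the index types and generic coefficient rings
  let σ₀ := {s : CoeffIdx A // (s.2 : Fin n → ℤ) ≠ 0}
  let B := MvPolynomial σ₀ 𝕜
  let K := FractionRing B
  let ιJ := {j : Fin k // j ∈ J}
  haveI : Nonempty ιJ := ⟨⟨hJne.choose, hJne.choose_spec⟩⟩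
  -- generic Laurent polynomials (without constant terms) over B
  let GB : ιJ → AddMonoidAlgebra B (Fin n → ℤ) := fun j =>
    ∑ a ∈ (A j.1).attach,
      if h : ((a : Fin n → ℤ)) = 0 then 0
      else AddMonoidAlgebra.single (a : Fin n → ℤ)
        (MvPolynomial.X (⟨⟨j.1, a⟩, h⟩ : σ₀))
  -- base change to the fraction field
  let ρ : AddMonoidAlgebra B (Fin n → ℤ) →+* AddMonoidAlgebra K (Fin n → ℤ) :=
    AddMonoidAlgebra.liftNCRingHom
      ((AddMonoidAlgebra.singleZeroRingHom).comp (algebraMap B K))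
      (AddMonoidAlgebra.of K (Fin n → ℤ)) (fun _ _ => Commute.all _ _)
  have hρ_single : ∀ (a : Fin n → ℤ) (r : B),
      ρ (AddMonoidAlgebra.single a r) = AddMonoidAlgebra.single a (algebraMap B K r) := by
    intro a r
    show AddMonoidAlgebra.liftNC _ _ _ = _
    rw [AddMonoidAlgebra.liftNC_single, AddMonoidAlgebra.of_apply]
    show AddMonoidAlgebra.single 0 (algebraMap B K r) * AddMonoidAlgebra.single a 1 = _
    rw [AddMonoidAlgebra.single_mul_single, zero_add, mul_one]
  have hρ_eq : ∀ f, (ρ f).coeff = Finsupp.mapRange (algebraMap B K) (map_zero _) f.coeff := by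
    intro f
    induction f using AddMonoidAlgebra.induction_linear with
    | zero => simp
    | add f g hf hg => rw [map_add, AddMonoidAlgebra.coeff_add, AddMonoidAlgebra.coeff_add, hf, hg, ← Finsupp.mapRange_add (fun a b => map_add (algebraMap B K) a b)]
    | single a b => rw [hρ_single, AddMonoidAlgebra.coeff_single, AddMonoidAlgebra.coeff_single, Finsupp.mapRange_single]
  have hρ_inj : Function.Injective ρ := by
    intro f g hfg
    have hfg := congrArg AddMonoidAlgebra.coeff hfg
    rw [hρ_eq f, hρ_eq g] at hfg
    refine AddMonoidAlgebra.coeff_injective (Finsupp.ext fun a => ?_)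
    have h3 : Finsupp.mapRange (algebraMap B K) (map_zero _) f.coeff a
        = Finsupp.mapRange (algebraMap B K) (map_zero _) g.coeff a := by rw [hfg]
    rw [Finsupp.mapRange_apply, Finsupp.mapRange_apply] at h3
    exact IsFractionRing.injective B K h3
  let GK : ιJ → AddMonoidAlgebra K (Fin n → ℤ) := fun j => ρ (GB j)
  -- supports
  let SS : Finset (Fin n → ℤ) := J.biUnion A
  have hsuppGB : ∀ j, (GB j).coeff.support ⊆ SS := by
    intro j
    show (∑ a ∈ (A j.1).attach,
      if h : ((a : Fin n → ℤ)) = 0 then 0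
      else AddMonoidAlgebra.single (a : Fin n → ℤ)
        (MvPolynomial.X (⟨⟨j.1, a⟩, h⟩ : σ₀)) : AddMonoidAlgebra B (Fin n → ℤ)).coeff.support ⊆ SS
    rw [AddMonoidAlgebra.coeff_sum]
    refine (Finsupp.support_finset_sum).trans ?_
    intro v hv
    rw [Finset.mem_biUnion] at hv
    obtain ⟨a, ha, hva⟩ := hv
    by_cases h : ((a : Fin n → ℤ)) = 0
    · rw [dif_pos h] at hva
      simp at hva
    · rw [dif_neg h, AddMonoidAlgebra.coeff_single] at hva
      have := Finsupp.support_single_subset hva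
      rw [Finset.mem_singleton] at this
      subst this
      exact Finset.mem_biUnion.mpr ⟨j.1, j.2, a.2⟩
  have hsuppGK : ∀ j, (GK j).coeff.support ⊆ SS := by
    intro j
    refine Finset.Subset.trans ?_ (hsuppGB j)
    show (ρ (GB j)).coeff.support ⊆ _
    rw [hρ_eq]
    exact Finsupp.support_mapRange
  have hdimSS : spanDim (SS : Set (Fin n → ℤ)) < Fintype.card ιJ := by
    have hcoe : (SS : Set (Fin n → ℤ)) = ⋃ j ∈ J, (A j : Set (Fin n → ℤ)) := by
      simp [SS]
    rw [hcoe]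
    have hcard : Fintype.card ιJ = J.card := Fintype.card_coe J
    rw [hcard]
    exact hJdim
  obtain ⟨P, hPne, hPann⟩ := Lem21.exists_annihilator SS GK hsuppGK hdimSS
  -- clear denominators
  obtain ⟨b, hb⟩ := IsLocalization.exist_integer_multiples (nonZeroDivisors B) P.support
    (fun β => MvPolynomial.coeff β P)
  let c' : (ιJ →₀ ℕ) → B := fun β =>
    if h : β ∈ P.support then (RingHom.mem_rangeS.mp (hb β h)).choose else 0
  have hc' : ∀ β (h : β ∈ P.support),
      algebraMap B K (c' β) = (b : B) • MvPolynomial.coeff β P := by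
    intro β h
    simp only [c', dif_pos h]
    exact (RingHom.mem_rangeS.mp (hb β h)).choose_spec
  let P' : MvPolynomial ιJ B := ∑ β ∈ P.support, MvPolynomial.monomial β (c' β)
  have hmap : MvPolynomial.map (algebraMap B K) P'
      = MvPolynomial.C (algebraMap B K (b : B)) * P := by
    apply MvPolynomial.ext
    intro β'
    rw [MvPolynomial.coeff_map, MvPolynomial.coeff_C_mul]
    have hcoeffP' : MvPolynomial.coeff β' P' = if β' ∈ P.support then c' β' else 0 := by
      show MvPolynomial.coeff β' (∑ β ∈ P.support, MvPolynomial.monomial β (c' β)) = _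
      rw [MvPolynomial.coeff_sum]
      rw [Finset.sum_congr rfl (fun β _ => MvPolynomial.coeff_monomial β' β (c' β))]
      exact Finset.sum_ite_eq' P.support β' c'
    rw [hcoeffP']
    by_cases hβ' : β' ∈ P.support
    · rw [if_pos hβ', hc' β' hβ', Algebra.smul_def]
    · rw [if_neg hβ', MvPolynomial.notMem_support_iff.mp hβ', mul_zero, map_zero]
  have halgb_ne : algebraMap B K (b : B) ≠ 0 := by
    intro hc
    exact nonZeroDivisors.coe_ne_zero b
      (IsFractionRing.injective B K (by rw [hc, map_zero]))
  have hP'ne : P' ≠ 0 := by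
    intro h0'
    have : MvPolynomial.C (algebraMap B K (b : B)) * P = 0 := by
      rw [← hmap, h0', map_zero]
    rcases mul_eq_zero.mp this with hC | hP
    · exact halgb_ne (by rwa [MvPolynomial.C_eq_zero] at hC)
    · exact hPne hP
  -- the relation descends to B
  have hcomp : ρ.comp ((MvPolynomial.aeval GB : MvPolynomial ιJ B →ₐ[B] _).toRingHom)
      = ((MvPolynomial.aeval GK : MvPolynomial ιJ K →ₐ[K] _).toRingHom).comp
        (MvPolynomial.map (algebraMap B K)) := by
    apply MvPolynomial.ringHom_ext
    · intro r
      rw [RingHom.comp_apply, RingHom.comp_apply, MvPolynomial.map_C]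
      show ρ ((MvPolynomial.aeval GB) (MvPolynomial.C r))
          = (MvPolynomial.aeval GK) (MvPolynomial.C (algebraMap B K r))
      rw [MvPolynomial.aeval_C, MvPolynomial.aeval_C]
      have h1 : (algebraMap B (AddMonoidAlgebra B (Fin n → ℤ))) r
          = AddMonoidAlgebra.single 0 r := by
        simp [AddMonoidAlgebra.coe_algebraMap]
      have h2 : (algebraMap K (AddMonoidAlgebra K (Fin n → ℤ))) (algebraMap B K r)
          = AddMonoidAlgebra.single 0 (algebraMap B K r) := by
        simp [AddMonoidAlgebra.coe_algebraMap]
      rw [h1, h2, hρ_single]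
    · intro j
      rw [RingHom.comp_apply, RingHom.comp_apply, MvPolynomial.map_X]
      show ρ ((MvPolynomial.aeval GB) (MvPolynomial.X j))
          = (MvPolynomial.aeval GK) (MvPolynomial.X j)
      rw [MvPolynomial.aeval_X, MvPolynomial.aeval_X]
  have hannB : MvPolynomial.aeval GB P' = 0 := by
    apply hρ_inj
    rw [map_zero]
    calc ρ ((MvPolynomial.aeval GB) P')
        = (MvPolynomial.aeval GK) (MvPolynomial.map (algebraMap B K) P') :=
          RingHom.congr_fun hcomp P'
      _ = (MvPolynomial.aeval GK) (MvPolynomial.C (algebraMap B K (b : B)) * P) := by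
          rw [hmap]
      _ = (algebraMap K _) (algebraMap B K (b : B)) * (MvPolynomial.aeval GK) P := by
          rw [map_mul, MvPolynomial.aeval_C]
      _ = 0 := by rw [hPann, mul_zero]
  -- the candidate polynomial q
  let ι₀ : B →+* MvPolynomial (CoeffIdx A) 𝕜 :=
    (MvPolynomial.rename (Subtype.val : σ₀ → CoeffIdx A)).toRingHom
  let Φ : MvPolynomial ιJ B →+* MvPolynomial (CoeffIdx A) 𝕜 :=
    MvPolynomial.eval₂Hom ι₀
      (fun j : ιJ => - MvPolynomial.X (⟨j.1, ⟨0, h0 j.1⟩⟩ : CoeffIdx A))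
  let q : MvPolynomial (CoeffIdx A) 𝕜 := Φ P'
  -- injectivity of Φ
  let emb : ιJ ⊕ σ₀ → CoeffIdx A :=
    Sum.elim (fun j : ιJ => (⟨j.1, ⟨0, h0 j.1⟩⟩ : CoeffIdx A)) Subtype.val
  have hembinj : Function.Injective emb := by
    rintro (j₁ | s₁) (j₂ | s₂) h
    · have h1 : j₁.1 = j₂.1 := congrArg Sigma.fst h
      exact congrArg Sum.inl (Subtype.ext h1)
    · exfalso
      have h2 : ((⟨j₁.1, ⟨0, h0 j₁.1⟩⟩ : CoeffIdx A).2 : Fin n → ℤ)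
          = (((s₂ : CoeffIdx A)).2 : Fin n → ℤ) :=
        congrArg (fun t : CoeffIdx A => (t.2 : Fin n → ℤ)) h
      exact s₂.2 (by rw [← h2])
    · exfalso
      have h2 : (((s₁ : CoeffIdx A)).2 : Fin n → ℤ)
          = ((⟨j₂.1, ⟨0, h0 j₂.1⟩⟩ : CoeffIdx A).2 : Fin n → ℤ) :=
        congrArg (fun t : CoeffIdx A => (t.2 : Fin n → ℤ)) h
      exact s₁.2 (by rw [h2])
    · exact congrArg Sum.inr (Subtype.ext h)
  let ν : MvPolynomial (CoeffIdx A) 𝕜 →+* MvPolynomial (CoeffIdx A) 𝕜 :=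
    (MvPolynomial.aeval (fun s : CoeffIdx A =>
      if ((s.2 : Fin n → ℤ)) = 0 then - MvPolynomial.X s else MvPolynomial.X s) :
      MvPolynomial (CoeffIdx A) 𝕜 →ₐ[𝕜] _).toRingHom
  let Ψ : MvPolynomial ιJ B →+* MvPolynomial (CoeffIdx A) 𝕜 :=
    ((MvPolynomial.rename emb).toRingHom).comp (MvPolynomial.iterToSum 𝕜 ιJ σ₀)
  have hνΦ : ν.comp Φ = Ψ := by
    apply MvPolynomial.ringHom_ext
    · intro r
      have hCC : (ν.comp Φ).comp (MvPolynomial.C : B →+* MvPolynomial ιJ B)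
          = Ψ.comp (MvPolynomial.C : B →+* MvPolynomial ιJ B) := by
        apply MvPolynomial.ringHom_ext
        · intro a
          show ν (Φ (MvPolynomial.C (MvPolynomial.C a)))
              = Ψ (MvPolynomial.C (MvPolynomial.C a))
          rw [show Φ (MvPolynomial.C (MvPolynomial.C a)) = ι₀ (MvPolynomial.C a) from
            MvPolynomial.eval₂Hom_C _ _ _]
          show ν ((MvPolynomial.rename _) (MvPolynomial.C a))
              = (MvPolynomial.rename emb) (MvPolynomial.iterToSum 𝕜 ιJ σ₀
                  (MvPolynomial.C (MvPolynomial.C a)))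
          rw [MvPolynomial.rename_C, MvPolynomial.iterToSum_C_C, MvPolynomial.rename_C]
          show (MvPolynomial.aeval _) (MvPolynomial.C a) = _
          rw [MvPolynomial.aeval_C, MvPolynomial.algebraMap_eq]
        · intro s₀
          show ν (Φ (MvPolynomial.C (MvPolynomial.X s₀)))
              = Ψ (MvPolynomial.C (MvPolynomial.X s₀))
          rw [show Φ (MvPolynomial.C (MvPolynomial.X s₀)) = ι₀ (MvPolynomial.X s₀) from
            MvPolynomial.eval₂Hom_C _ _ _]
          show ν ((MvPolynomial.rename _) (MvPolynomial.X s₀))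
              = (MvPolynomial.rename emb) (MvPolynomial.iterToSum 𝕜 ιJ σ₀
                  (MvPolynomial.C (MvPolynomial.X s₀)))
          rw [MvPolynomial.rename_X, MvPolynomial.iterToSum_C_X, MvPolynomial.rename_X]
          show (MvPolynomial.aeval _) (MvPolynomial.X ((s₀ : CoeffIdx A))) = _
          rw [MvPolynomial.aeval_X, if_neg s₀.2]
          rfl
      exact RingHom.congr_fun hCC r
    · intro j
      show ν (Φ (MvPolynomial.X j)) = Ψ (MvPolynomial.X j)
      rw [show Φ (MvPolynomial.X j)
          = - MvPolynomial.X (⟨j.1, ⟨0, h0 j.1⟩⟩ : CoeffIdx A) from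
        MvPolynomial.eval₂Hom_X' _ _ _]
      rw [map_neg]
      show - (MvPolynomial.aeval _) (MvPolynomial.X (⟨j.1, ⟨0, h0 j.1⟩⟩ : CoeffIdx A))
          = (MvPolynomial.rename emb) (MvPolynomial.iterToSum 𝕜 ιJ σ₀ (MvPolynomial.X j))
      rw [MvPolynomial.aeval_X, MvPolynomial.iterToSum_X, MvPolynomial.rename_X]
      rw [if_pos rfl, neg_neg]
      rfl
  have hits_left : ∀ p : MvPolynomial ιJ B,
      MvPolynomial.sumToIter 𝕜 ιJ σ₀ (MvPolynomial.iterToSum 𝕜 ιJ σ₀ p) = p := by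
    have hh : (MvPolynomial.sumToIter 𝕜 ιJ σ₀).comp (MvPolynomial.iterToSum 𝕜 ιJ σ₀)
        = RingHom.id _ := by
      apply MvPolynomial.ringHom_ext
      · intro r
        have hCC : ((MvPolynomial.sumToIter 𝕜 ιJ σ₀).comp
            (MvPolynomial.iterToSum 𝕜 ιJ σ₀)).comp (MvPolynomial.C : B →+* _)
            = (RingHom.id _).comp (MvPolynomial.C : B →+* MvPolynomial ιJ B) := by
          apply MvPolynomial.ringHom_ext
          · intro a
            show (MvPolynomial.sumToIter 𝕜 ιJ σ₀) ((MvPolynomial.iterToSum 𝕜 ιJ σ₀)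
              (MvPolynomial.C (MvPolynomial.C a))) = MvPolynomial.C (MvPolynomial.C a)
            rw [MvPolynomial.iterToSum_C_C, MvPolynomial.sumToIter_C]
          · intro s₀
            show (MvPolynomial.sumToIter 𝕜 ιJ σ₀) ((MvPolynomial.iterToSum 𝕜 ιJ σ₀)
              (MvPolynomial.C (MvPolynomial.X s₀))) = MvPolynomial.C (MvPolynomial.X s₀)
            rw [MvPolynomial.iterToSum_C_X, MvPolynomial.sumToIter_Xr]
        exact RingHom.congr_fun hCC r
      · intro j
        show (MvPolynomial.sumToIter 𝕜 ιJ σ₀) ((MvPolynomial.iterToSum 𝕜 ιJ σ₀)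
          (MvPolynomial.X j)) = MvPolynomial.X j
        rw [MvPolynomial.iterToSum_X, MvPolynomial.sumToIter_Xl]
    intro p
    exact RingHom.congr_fun hh p
  have hΨinj : Function.Injective Ψ := by
    intro p₁ p₂ hp
    have h2 : (MvPolynomial.rename emb) (MvPolynomial.iterToSum 𝕜 ιJ σ₀ p₁)
        = (MvPolynomial.rename emb) (MvPolynomial.iterToSum 𝕜 ιJ σ₀ p₂) := hp
    have h3 := MvPolynomial.rename_injective emb hembinj h2
    have h4 := congrArg (MvPolynomial.sumToIter 𝕜 ιJ σ₀) h3
    rwa [hits_left, hits_left] at h4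
  have hqne : q ≠ 0 := by
    intro h0'
    have hΨ0 : Ψ P' = 0 := by
      rw [← hνΦ, RingHom.comp_apply]
      show ν q = 0
      rw [h0', map_zero]
    exact hP'ne (hΨinj (by rw [hΨ0, map_zero]))
  -- existence of a good point
  have hqX : q * ∏ s : CoeffIdx A, MvPolynomial.X s ≠ 0 :=
    mul_ne_zero hqne (Finset.prod_ne_zero_iff.mpr fun s _ => MvPolynomial.X_ne_zero s)
  have hwit : ∃ c : CoeffIdx A → 𝕜, (∀ s, c s ≠ 0) ∧ MvPolynomial.eval c q ≠ 0 := by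
    by_contra hcon
    push_neg at hcon
    apply hqX
    apply MvPolynomial.funext
    intro x
    rw [map_zero, map_mul]
    by_cases hx : ∀ s, x s ≠ 0
    · rw [hcon x hx, zero_mul]
    · push_neg at hx
      obtain ⟨s, hs⟩ := hx
      have : MvPolynomial.eval x (∏ t : CoeffIdx A, MvPolynomial.X t)
          = ∏ t : CoeffIdx A, x t := by
        rw [map_prod]
        exact Finset.prod_congr rfl fun t _ => MvPolynomial.eval_X _
      rw [this, Finset.prod_eq_zero (Finset.mem_univ s) hs, mul_zero]
  refine ⟨q, hwit, ?_⟩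
  intro c hc hqc
  have h2 : ∀ x : Fin n → 𝕜ˣ, ∃ j, evalAt A c x j ≠ 0 := by
    intro x
    by_contra hxall
    push_neg at hxall
    apply hqc
    let θ : B →+* 𝕜 := MvPolynomial.eval (fun s₀ : σ₀ => c (s₀ : CoeffIdx A))
    let χ : AddMonoidAlgebra B (Fin n → ℤ) →+* 𝕜 := Lem21.torusEv θ x
    have hhom2 : χ.comp ((MvPolynomial.aeval GB : MvPolynomial ιJ B →ₐ[B] _).toRingHom)
        = (MvPolynomial.eval c).comp Φ := by
      apply MvPolynomial.ringHom_ext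
      · intro r
        rw [RingHom.comp_apply, RingHom.comp_apply]
        show χ ((MvPolynomial.aeval GB) (MvPolynomial.C r))
            = (MvPolynomial.eval c) (Φ (MvPolynomial.C r))
        rw [MvPolynomial.aeval_C]
        rw [show Φ (MvPolynomial.C r) = ι₀ r from MvPolynomial.eval₂Hom_C _ _ _]
        have h1 : (algebraMap B (AddMonoidAlgebra B (Fin n → ℤ))) r
            = AddMonoidAlgebra.single 0 r := by
          simp [AddMonoidAlgebra.coe_algebraMap]
        rw [h1]
        show Lem21.torusEv θ x (AddMonoidAlgebra.single 0 r)
            = (MvPolynomial.eval c) ((MvPolynomial.rename _) r)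
        rw [Lem21.torusEv_single, MvPolynomial.eval_rename]
        have hone0 : ((∏ i, x i ^ ((0 : Fin n → ℤ) i) : 𝕜ˣ) : 𝕜) = 1 := by
          have hz : ∀ i, ((0 : Fin n → ℤ)) i = 0 := fun _ => rfl
          rw [Finset.prod_congr rfl fun i _ => by rw [hz i, zpow_zero]]
          rw [Finset.prod_const_one, Units.val_one]
        rw [hone0, mul_one]
        rfl
      · intro j
        rw [RingHom.comp_apply, RingHom.comp_apply]
        show χ ((MvPolynomial.aeval GB) (MvPolynomial.X j))
            = (MvPolynomial.eval c) (Φ (MvPolynomial.X j))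
        rw [MvPolynomial.aeval_X]
        rw [show Φ (MvPolynomial.X j)
            = - MvPolynomial.X (⟨j.1, ⟨0, h0 j.1⟩⟩ : CoeffIdx A) from
          MvPolynomial.eval₂Hom_X' _ _ _]
        rw [map_neg, MvPolynomial.eval_X]
        -- LHS: evaluate the generic polynomial
        show χ (∑ a ∈ (A j.1).attach,
            if h : ((a : Fin n → ℤ)) = 0 then 0
            else AddMonoidAlgebra.single (a : Fin n → ℤ)
              (MvPolynomial.X (⟨⟨j.1, a⟩, h⟩ : σ₀))) = _
        rw [map_sum]
        set a₀ : {a // a ∈ A j.1} := ⟨0, h0 j.1⟩ with ha₀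
        have hterm : ∀ a ∈ (A j.1).attach,
            χ (if h : ((a : Fin n → ℤ)) = 0 then 0
               else AddMonoidAlgebra.single (a : Fin n → ℤ)
                 (MvPolynomial.X (⟨⟨j.1, a⟩, h⟩ : σ₀)))
            = (if a = a₀ then 0
               else c ⟨j.1, a⟩ * ((∏ i, x i ^ ((a : Fin n → ℤ) i) : 𝕜ˣ) : 𝕜)) := by
          intro a _
          by_cases h : ((a : Fin n → ℤ)) = 0
          · rw [dif_pos h, if_pos (Subtype.ext h), map_zero]
          · rw [dif_neg h, if_neg (fun hc' => h (by rw [hc']))]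
            show Lem21.torusEv θ x _ = _
            rw [Lem21.torusEv_single]
            congr 1
            exact MvPolynomial.eval_X _
        rw [Finset.sum_congr rfl hterm]
        have hsplit : ∀ a : {a // a ∈ A j.1},
            (if a = a₀ then 0
             else c ⟨j.1, a⟩ * ((∏ i, x i ^ ((a : Fin n → ℤ) i) : 𝕜ˣ) : 𝕜))
            = c ⟨j.1, a⟩ * ((∏ i, x i ^ ((a : Fin n → ℤ) i) : 𝕜ˣ) : 𝕜)
              - (if a = a₀ then
                  c ⟨j.1, a⟩ * ((∏ i, x i ^ ((a : Fin n → ℤ) i) : 𝕜ˣ) : 𝕜) else 0) := by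
          intro a
          by_cases h : a = a₀
          · rw [if_pos h, if_pos h, sub_self]
          · rw [if_neg h, if_neg h, sub_zero]
        rw [Finset.sum_congr rfl (fun a _ => hsplit a), Finset.sum_sub_distrib]
        have hev := hxall j.1
        rw [evalAt] at hev
        rw [hev]
        have hlast : ∑ a ∈ (A j.1).attach,
            (if a = a₀ then
              c ⟨j.1, a⟩ * ((∏ i, x i ^ ((a : Fin n → ℤ) i) : 𝕜ˣ) : 𝕜) else 0)
            = c ⟨j.1, a₀⟩ * ((∏ i, x i ^ ((a₀ : Fin n → ℤ) i) : 𝕜ˣ) : 𝕜) := by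
          rw [Finset.sum_ite_eq' (A j.1).attach a₀
            (fun a => c ⟨j.1, a⟩ * ((∏ i, x i ^ ((a : Fin n → ℤ) i) : 𝕜ˣ) : 𝕜))]
          rw [if_pos (Finset.mem_attach _ _)]
        rw [hlast]
        have hone : ((∏ i, x i ^ ((a₀ : Fin n → ℤ) i) : 𝕜ˣ) : 𝕜) = 1 := by
          have : ∀ i, ((a₀ : Fin n → ℤ)) i = 0 := fun i => rfl
          simp [this]
        rw [hone, mul_one, zero_sub]
    have hcf2 : χ ((MvPolynomial.aeval GB) P') = (MvPolynomial.eval c) (Φ P') := by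
      have hcf := RingHom.congr_fun hhom2 P'
      rwa [RingHom.comp_apply, RingHom.comp_apply] at hcf
    rw [hannB, map_zero] at hcf2
    show MvPolynomial.eval c q = 0
    exact hcf2.symm
  have h1 : Ideal.span (Set.range (lpoly A c)) = ⊤ := by
    apply Lem21.span_eq_top_of_no_common_zero
    intro x
    obtain ⟨j, hj⟩ := h2 x
    exact ⟨j, by rw [Lem21.torusEv_lpoly]; exact hj⟩
  exact ⟨h1, h2⟩
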